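/- Indiscernibility with modal substituends entails (Cov). Fix a type W of worlds, a relation R : W → W → Prop, and a domain type D. Suppose the indiscernibility schema (Indisc) holds with arbitrary (including modal) substituends, i.e. for every property Φ : (W → Set D) → W → Prop, all world-indexed pluralities pp, qq : W → Set D, and every world w: if pp w = qq w then Φ pp w ↔ Φ qq w. Then (Cov) holds: for all pp, qq and every world w, if pp w = qq w then pp v = qq v for every v with R w v. -/
import Mathlib

/-- Indiscernibility with modal substituends entails (Cov). -/
theorem indisc_entails_cov (W D : Type) (R : W → W → Prop)
    (indisc : ∀ (Φ : (W → Set D) → W → Prop) (pp qq : W → Set D) (w : W),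
      pp w = qq w → (Φ pp w ↔ Φ qq w)) :
    ∀ (pp qq : W → Set D) (w : W), pp w = qq w → ∀ v, R w v → pp v = qq v := by
  intro pp qq w h
  exact (indisc (fun rr u => ∀ v, R u v → rr v = qq v) pp qq w h).mpr (fun v _ => rfl)
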